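/- Let G be a finite graph, let θ ≥ 1 be an integer, and let 𝒯 be a tangle of order θ in G. Let Z ⊆ V(G) with |Z| < θ, and let 𝒯∖Z be the set of all separations (A′, B′) of G∖Z of order less than θ − |Z| such that there exists (A, B) ∈ 𝒯 with Z ⊆ V(A ∩ B), A∖Z = A′ and B∖Z = B′. Then 𝒯∖Z is a tangle of order θ − |Z| in the graph G∖Z. -/
import Mathlib


open scoped Classical

/-- A finite graph (no loops, no parallel edges), given by a finite vertex set and a
finite set of edges, each edge being an unordered pair of distinct vertices. -/
structure FinGraph (V : Type*) where
  verts : Finset V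
  edges : Finset (Sym2 V)
  edge_sub : ∀ e ∈ edges, ∀ v ∈ e, v ∈ verts
  no_loops : ∀ e ∈ edges, ¬ e.IsDiag

namespace FinGraph

variable {V : Type*}

/-- The union of two graphs. -/
def union [DecidableEq V] (A B : FinGraph V) : FinGraph V where
  verts := A.verts ∪ B.verts
  edges := A.edges ∪ B.edges
  edge_sub := by
    intro e he v hv
    rcases Finset.mem_union.1 he with h | h
    · exact Finset.mem_union_left _ (A.edge_sub e h v hv)
    · exact Finset.mem_union_right _ (B.edge_sub e h v hv)
  no_loops := by
    intro e he
    rcases Finset.mem_union.1 he with h | h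
    · exact A.no_loops e h
    · exact B.no_loops e h

/-- `A` is a subgraph of `G`. -/
def IsSubgraph (A G : FinGraph V) : Prop :=
  A.verts ⊆ G.verts ∧ A.edges ⊆ G.edges

/-- `(A, B)` is a separation of `G`: a pair of subgraphs with `A ∪ B = G` and
`E(A ∩ B) = ∅`. -/
def IsSeparation [DecidableEq V] (G A B : FinGraph V) : Prop :=
  A.IsSubgraph G ∧ B.IsSubgraph G ∧ A.union B = G ∧ A.edges ∩ B.edges = ∅

/-- The order of a separation `(A, B)` is `|V(A ∩ B)| = |V(A) ∩ V(B)|`. -/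
def sepOrder [DecidableEq V] (A B : FinGraph V) : ℕ := (A.verts ∩ B.verts).card

/-- The graph `G∖Z` obtained from `G` by deleting the vertices in `Z` (and all edges
meeting `Z`). -/
noncomputable def del (G : FinGraph V) (Z : Finset V) : FinGraph V where
  verts := G.verts \ Z
  edges := G.edges.filter fun e => ∀ v ∈ e, v ∉ Z
  edge_sub := by
    intro e he v hv
    rw [Finset.mem_filter] at he
    exact Finset.mem_sdiff.2 ⟨G.edge_sub e he.1 v hv, he.2 v hv⟩
  no_loops := by
    intro e he
    rw [Finset.mem_filter] at he
    exact G.no_loops e he.1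

/-- A tangle of order `θ` (where `θ ≥ 1`) in `G`: a set `T` of separations of `G`, all of
order `< θ`, such that (1) for every separation `(A, B)` of order `< θ`, one of `(A, B)`,
`(B, A)` belongs to `T`; (2) if `(A₁,B₁), (A₂,B₂), (A₃,B₃) ∈ T` then `A₁ ∪ A₂ ∪ A₃ ≠ G`;
and (3) if `(A, B) ∈ T` then `V(A) ≠ V(G)`. -/
def IsTangle [DecidableEq V] (G : FinGraph V) (θ : ℕ)
    (T : Set (FinGraph V × FinGraph V)) : Prop :=
  1 ≤ θ ∧
  (∀ p ∈ T, IsSeparation G p.1 p.2 ∧ sepOrder p.1 p.2 < θ) ∧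
  (∀ A B : FinGraph V, IsSeparation G A B → sepOrder A B < θ →
    (A, B) ∈ T ∨ (B, A) ∈ T) ∧
  (∀ p₁ ∈ T, ∀ p₂ ∈ T, ∀ p₃ ∈ T, (p₁.1).union ((p₂.1).union p₃.1) ≠ G) ∧
  (∀ p ∈ T, p.1.verts ≠ G.verts)

end FinGraph

open FinGraph
namespace MyTangleAux

open FinGraph

variable {V : Type*}

theorem fg_ext {A B : FinGraph V} (hv : A.verts = B.verts) (he : A.edges = B.edges) :
    A = B := by
  cases A; cases B; simp_all

theorem sep_symm [DecidableEq V] {G A B : FinGraph V} (h : IsSeparation G A B) :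
    IsSeparation G B A := by
  obtain ⟨h1, h2, h3, h4⟩ := h
  refine ⟨h2, h1, ?_, ?_⟩
  · rw [← h3]; exact fg_ext (Finset.union_comm _ _) (Finset.union_comm _ _)
  · rw [Finset.inter_comm]; exact h4

theorem sepOrder_symm [DecidableEq V] (A B : FinGraph V) : sepOrder B A = sepOrder A B := by
  unfold sepOrder; rw [Finset.inter_comm]

theorem sym2_case {α : Type*} {e : Sym2 α} {P Q R : α → Prop}
    (hPQ : ∀ v ∈ e, ¬ R v → P v ∨ Q v)
    (hz : ∃ v ∈ e, R v)
    (hna : ¬ ∀ v ∈ e, P v ∨ R v) :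
    ∀ v ∈ e, Q v ∨ R v := by
  induction e using Sym2.inductionOn with
  | _ x y =>
    simp only [Sym2.mem_iff] at hPQ hz hna ⊢
    push_neg at hna
    obtain ⟨z, hz1, hz2⟩ := hz
    obtain ⟨w, hw1, hw2⟩ := hna
    have hx := hPQ x (Or.inl rfl)
    have hy := hPQ y (Or.inr rfl)
    intro v hv
    rcases hv with rfl | rfl <;> rcases hz1 with rfl | rfl <;> rcases hw1 with rfl | rfl <;> tauto

/-- Add a set of edges (with all endpoints already in `A`) to `A`. -/
def addE [DecidableEq V] (A G : FinGraph V) (M : Finset (Sym2 V))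
    (hMG : M ⊆ G.edges) (hMA : ∀ e ∈ M, ∀ v ∈ e, v ∈ A.verts) : FinGraph V where
  verts := A.verts
  edges := A.edges ∪ M
  edge_sub := by
    intro e he v hv
    rcases Finset.mem_union.1 he with h | h
    · exact A.edge_sub e h v hv
    · exact hMA e h v hv
  no_loops := by
    intro e he
    rcases Finset.mem_union.1 he with h | h
    · exact A.no_loops e h
    · exact G.no_loops e (hMG h)

/-- Remove a set of edges from `B`. -/
def subE [DecidableEq V] (B : FinGraph V) (M : Finset (Sym2 V)) : FinGraph V where
  verts := B.verts
  edges := B.edges \ M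
  edge_sub := fun e he v hv => B.edge_sub e (Finset.mem_sdiff.1 he).1 v hv
  no_loops := fun e he => B.no_loops e (Finset.mem_sdiff.1 he).1

/-- Shifting lemma: moving edges whose endpoints all lie in the separator from the
`B`-side to the `A`-side of a separation in a tangle stays in the tangle. -/
theorem shift_mem [DecidableEq V] {G : FinGraph V} {θ : ℕ}
    {T : Set (FinGraph V × FinGraph V)} (hT : IsTangle G θ T)
    {A B : FinGraph V} (hAB : (A, B) ∈ T)
    {M : Finset (Sym2 V)} (hMB : M ⊆ B.edges) (hMG : M ⊆ G.edges)
    (hMA : ∀ e ∈ M, ∀ v ∈ e, v ∈ A.verts) (hMA2 : ∀ e ∈ M, ∀ v ∈ e, v ∈ B.verts) :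
    (addE A G M hMG hMA, subE B M) ∈ T := by
  obtain ⟨hθ1, hmem, hax1, hax2, hax3⟩ := hT
  obtain ⟨hsep, hord⟩ := hmem _ hAB
  obtain ⟨⟨hAv, hAe⟩, ⟨hBv, hBe⟩, huAB, hdAB⟩ := hsep
  have hvu : A.verts ∪ B.verts = G.verts := congrArg verts huAB
  have heu : A.edges ∪ B.edges = G.edges := congrArg edges huAB
  have hdis : ∀ e, ¬ (e ∈ A.edges ∧ e ∈ B.edges) := by
    intro e he
    exact (Finset.eq_empty_iff_forall_notMem.1 hdAB e) (Finset.mem_inter.2 he)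
  have hsep' : IsSeparation G (addE A G M hMG hMA) (subE B M) := by
    refine ⟨⟨hAv, Finset.union_subset hAe hMG⟩,
      ⟨hBv, Finset.Subset.trans (Finset.sdiff_subset) hBe⟩, ?_, ?_⟩
    · apply fg_ext
      · exact hvu
      · show (A.edges ∪ M) ∪ (B.edges \ M) = G.edges
        rw [← heu]
        ext e
        have hm := @hMB e
        simp only [Finset.mem_union, Finset.mem_sdiff]
        by_cases h : e ∈ M <;> tauto
    · show (A.edges ∪ M) ∩ (B.edges \ M) = ∅
      ext e
      simp only [Finset.mem_inter, Finset.mem_union, Finset.mem_sdiff,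
        Finset.notMem_empty, iff_false]
      rintro ⟨h1 | h1, h2, h3⟩
      · exact hdis e ⟨h1, h2⟩
      · exact h3 h1
  have hord' : sepOrder (addE A G M hMG hMA) (subE B M) < θ := hord
  rcases hax1 _ _ hsep' hord' with h | h
  · exact h
  · exfalso
    set K : FinGraph V :=
      ⟨A.verts ∩ B.verts, M,
        fun e he v hv => Finset.mem_inter.2 ⟨hMA e he v hv, hMA2 e he v hv⟩,
        fun e he => G.no_loops e (hMG he)⟩ with hK
    set L : FinGraph V :=
      ⟨G.verts, G.edges \ M,
        fun e he v hv => G.edge_sub e (Finset.mem_sdiff.1 he).1 v hv,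
        fun e he => G.no_loops e (Finset.mem_sdiff.1 he).1⟩ with hL
    have hKL : IsSeparation G K L := by
      refine ⟨⟨Finset.Subset.trans (Finset.inter_subset_left) hAv, hMG⟩,
        ⟨Finset.Subset.refl _, Finset.sdiff_subset⟩, ?_, ?_⟩
      · apply fg_ext
        · show (A.verts ∩ B.verts) ∪ G.verts = G.verts
          exact Finset.union_eq_right.2 (Finset.Subset.trans (Finset.inter_subset_left) hAv)
        · show M ∪ (G.edges \ M) = G.edges
          ext e
          have hm := @hMG e
          simp only [Finset.mem_union, Finset.mem_sdiff]
          by_cases h : e ∈ M <;> tauto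
      · show M ∩ (G.edges \ M) = ∅
        ext e
        simp only [Finset.mem_inter, Finset.mem_sdiff, Finset.notMem_empty, iff_false]
        rintro ⟨h1, _, h3⟩
        exact h3 h1
    have hKLord : sepOrder K L < θ := by
      show ((A.verts ∩ B.verts) ∩ G.verts).card < θ
      have : (A.verts ∩ B.verts) ∩ G.verts = A.verts ∩ B.verts :=
        Finset.inter_eq_left.2 (Finset.Subset.trans (Finset.inter_subset_left) hAv)
      rw [this]; exact hord
    have hKT : (K, L) ∈ T := by
      rcases hax1 _ _ hKL hKLord with h' | h'
      · exact h'
      · exact absurd rfl (hax3 _ h')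
    apply hax2 _ hAB _ h _ hKT
    apply fg_ext
    · show A.verts ∪ (B.verts ∪ (A.verts ∩ B.verts)) = G.verts
      rw [← hvu]
      ext v
      simp only [Finset.mem_union, Finset.mem_inter]
      tauto
    · show A.edges ∪ ((B.edges \ M) ∪ M) = G.edges
      rw [← heu]
      ext e
      have hm := @hMB e
      simp only [Finset.mem_union, Finset.mem_sdiff]
      by_cases h : e ∈ M <;> tauto

/-- Extend a subgraph of `G∖Z` by `Z` and a set of edges. -/
def extend [DecidableEq V] (G A' : FinGraph V) (Z : Finset V) (E : Finset (Sym2 V))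
    (hEG : E ⊆ G.edges) (hEs : ∀ e ∈ E, ∀ v ∈ e, v ∈ A'.verts ∪ Z) : FinGraph V where
  verts := A'.verts ∪ Z
  edges := A'.edges ∪ E
  edge_sub := by
    intro e he v hv
    rcases Finset.mem_union.1 he with h | h
    · exact Finset.mem_union_left _ (A'.edge_sub e h v hv)
    · exact hEs e h v hv
  no_loops := by
    intro e he
    rcases Finset.mem_union.1 he with h | h
    · exact A'.no_loops e h
    · exact G.no_loops e (hEG h)

theorem extend_del [DecidableEq V] {G A' : FinGraph V} {Z : Finset V} {E : Finset (Sym2 V)}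
    {hEG : E ⊆ G.edges} {hEs : ∀ e ∈ E, ∀ v ∈ e, v ∈ A'.verts ∪ Z}
    (hvZ : ∀ v ∈ A'.verts, v ∉ Z)
    (heZ : ∀ e ∈ A'.edges, ∀ v ∈ e, v ∉ Z)
    (hEZ : ∀ e ∈ E, ∃ v ∈ e, v ∈ Z) :
    (extend G A' Z E hEG hEs).del Z = A' := by
  apply fg_ext
  · show ((extend G A' Z E hEG hEs).del Z).verts = A'.verts
    unfold del extend
    ext v
    simp only [Finset.mem_sdiff, Finset.mem_union]
    constructor
    · rintro ⟨h | h, hz⟩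
      · exact h
      · exact absurd h hz
    · intro h; exact ⟨Or.inl h, hvZ v h⟩
  · show ((extend G A' Z E hEG hEs).del Z).edges = A'.edges
    unfold del extend
    ext e
    simp only [Finset.mem_filter, Finset.mem_union]
    constructor
    · rintro ⟨h | h, hz⟩
      · exact h
      · obtain ⟨v, hv1, hv2⟩ := hEZ e h
        exact absurd hv2 (hz v hv1)
    · intro h; exact ⟨Or.inl h, heZ e h⟩

end MyTangleAux
namespace MyTangleAux

theorem mem_del_verts {V : Type*} {G : FinGraph V} {Z : Finset V} {v : V} :
    v ∈ (G.del Z).verts ↔ v ∈ G.verts ∧ v ∉ Z := by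
  unfold del; exact Finset.mem_sdiff

theorem mem_del_edges {V : Type*} {G : FinGraph V} {Z : Finset V} {e : Sym2 V} :
    e ∈ (G.del Z).edges ↔ e ∈ G.edges ∧ ∀ v ∈ e, v ∉ Z := by
  unfold del; exact Finset.mem_filter

end MyTangleAux
open MyTangleAux

/-- If `T` is a tangle of order `θ` in `G` and `Z ⊆ V(G)` with `|Z| < θ`, then `T∖Z` —
the set of all separations `(A′, B′)` of `G∖Z` of order `< θ − |Z|` such that there exists
`(A, B) ∈ T` with `Z ⊆ V(A ∩ B)`, `A∖Z = A′` and `B∖Z = B′` — is a tangle of order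
`θ − |Z|` in `G∖Z`. -/
theorem tangle_deleteVerts {V : Type*} [DecidableEq V]
    (G : FinGraph V) (θ : ℕ) (hθ : 1 ≤ θ)
    (T : Set (FinGraph V × FinGraph V)) (hT : IsTangle G θ T)
    (Z : Finset V) (hZG : Z ⊆ G.verts) (hZθ : Z.card < θ) :
    IsTangle (G.del Z) (θ - Z.card)
      {p : FinGraph V × FinGraph V |
        IsSeparation (G.del Z) p.1 p.2 ∧ sepOrder p.1 p.2 < θ - Z.card ∧
        ∃ q ∈ T, Z ⊆ q.1.verts ∩ q.2.verts ∧
          q.1.del Z = p.1 ∧ q.2.del Z = p.2} := by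
  obtain ⟨hθ1, hmem, hax1, hax2, hax3⟩ := id hT
  refine ⟨by omega, fun p hp => ⟨hp.1, hp.2.1⟩, ?_, ?_, ?_⟩
  · -- Axiom (1)
    intro A' B' hsep' hord'
    obtain ⟨⟨hA'v, hA'e⟩, ⟨hB'v, hB'e⟩, hu', hd'⟩ := id hsep'
    have hvu : A'.verts ∪ B'.verts = (G.del Z).verts := congrArg FinGraph.verts hu'
    have heu : A'.edges ∪ B'.edges = (G.del Z).edges := congrArg FinGraph.edges hu'
    have hA'Z : ∀ v ∈ A'.verts, v ∉ Z := fun v hv => (mem_del_verts.1 (hA'v hv)).2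
    have hB'Z : ∀ v ∈ B'.verts, v ∉ Z := fun v hv => (mem_del_verts.1 (hB'v hv)).2
    have hA'vG : A'.verts ⊆ G.verts := fun v hv => (mem_del_verts.1 (hA'v hv)).1
    have hB'vG : B'.verts ⊆ G.verts := fun v hv => (mem_del_verts.1 (hB'v hv)).1
    have hA'G : A'.edges ⊆ G.edges := fun e he => (mem_del_edges.1 (hA'e he)).1
    have hB'G : B'.edges ⊆ G.edges := fun e he => (mem_del_edges.1 (hB'e he)).1
    have hA'eZ : ∀ e ∈ A'.edges, ∀ v ∈ e, v ∉ Z := fun e he => (mem_del_edges.1 (hA'e he)).2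
    have hB'eZ : ∀ e ∈ B'.edges, ∀ v ∈ e, v ∉ Z := fun e he => (mem_del_edges.1 (hB'e he)).2
    have hcov : ∀ v ∈ G.verts, v ∉ Z → v ∈ A'.verts ∨ v ∈ B'.verts := by
      intro v hv hz
      have h1 : v ∈ (G.del Z).verts := mem_del_verts.2 ⟨hv, hz⟩
      rw [← hvu] at h1
      exact Finset.mem_union.1 h1
    set EA := G.edges.filter (fun e => (∃ v ∈ e, v ∈ Z) ∧ ∀ v ∈ e, v ∈ A'.verts ∪ Z)
      with hEAdef
    set EB := G.edges.filter (fun e => (∃ v ∈ e, v ∈ Z) ∧ ¬ ∀ v ∈ e, v ∈ A'.verts ∪ Z)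
      with hEBdef
    have hEAG : EA ⊆ G.edges := Finset.filter_subset _ _
    have hEBG : EB ⊆ G.edges := Finset.filter_subset _ _
    have hEAs : ∀ e ∈ EA, ∀ v ∈ e, v ∈ A'.verts ∪ Z := by
      intro e he
      rw [hEAdef, Finset.mem_filter] at he
      exact he.2.2
    have hEAZ : ∀ e ∈ EA, ∃ v ∈ e, v ∈ Z := by
      intro e he
      rw [hEAdef, Finset.mem_filter] at he
      exact he.2.1
    have hEBZ : ∀ e ∈ EB, ∃ v ∈ e, v ∈ Z := by
      intro e he
      rw [hEBdef, Finset.mem_filter] at he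
      exact he.2.1
    have hEBs : ∀ e ∈ EB, ∀ v ∈ e, v ∈ B'.verts ∪ Z := by
      intro e he
      rw [hEBdef, Finset.mem_filter] at he
      obtain ⟨heG, hz, hna⟩ := he
      have hna' : ¬ ∀ v ∈ e, v ∈ A'.verts ∨ v ∈ Z :=
        fun h => hna (fun v hv => Finset.mem_union.2 (h v hv))
      have hres := sym2_case (P := (· ∈ A'.verts)) (Q := (· ∈ B'.verts)) (R := (· ∈ Z))
        (fun v hv hvz => hcov v (G.edge_sub e heG v hv) hvz) hz hna'
      intro v hv
      exact Finset.mem_union.2 (hres v hv)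
    set A := extend G A' Z EA hEAG hEAs with hAdef
    set B := extend G B' Z EB hEBG hEBs with hBdef
    have hAv : A.verts = A'.verts ∪ Z := by rw [hAdef]; rfl
    have hBv : B.verts = B'.verts ∪ Z := by rw [hBdef]; rfl
    have hAe : A.edges = A'.edges ∪ EA := by rw [hAdef]; rfl
    have hBe : B.edges = B'.edges ∪ EB := by rw [hBdef]; rfl
    have hsepAB : IsSeparation G A B := by
      refine ⟨⟨?_, ?_⟩, ⟨?_, ?_⟩, ?_, ?_⟩
      · rw [hAv]; exact Finset.union_subset hA'vG hZG
      · rw [hAe]; exact Finset.union_subset hA'G hEAG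
      · rw [hBv]; exact Finset.union_subset hB'vG hZG
      · rw [hBe]; exact Finset.union_subset hB'G hEBG
      · apply fg_ext
        · show A.verts ∪ B.verts = G.verts
          rw [hAv, hBv]
          ext v
          simp only [Finset.mem_union]
          constructor
          · rintro ((h | h) | (h | h))
            · exact hA'vG h
            · exact hZG h
            · exact hB'vG h
            · exact hZG h
          · intro hv
            by_cases hz : v ∈ Z
            · exact Or.inl (Or.inr hz)
            · rcases hcov v hv hz with h | h
              · exact Or.inl (Or.inl h)
              · exact Or.inr (Or.inl h)
        · show A.edges ∪ B.edges = G.edges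
          rw [hAe, hBe]
          ext e
          simp only [Finset.mem_union]
          constructor
          · rintro ((h | h) | (h | h))
            · exact hA'G h
            · exact hEAG h
            · exact hB'G h
            · exact hEBG h
          · intro he
            by_cases hz : ∃ v ∈ e, v ∈ Z
            · by_cases ha : ∀ v ∈ e, v ∈ A'.verts ∪ Z
              · refine Or.inl (Or.inr ?_)
                rw [hEAdef, Finset.mem_filter]
                exact ⟨he, hz, ha⟩
              · refine Or.inr (Or.inr ?_)
                rw [hEBdef, Finset.mem_filter]
                exact ⟨he, hz, ha⟩
            · push_neg at hz
              have h1 : e ∈ (G.del Z).edges := mem_del_edges.2 ⟨he, hz⟩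
              rw [← heu] at h1
              rcases Finset.mem_union.1 h1 with h | h
              · exact Or.inl (Or.inl h)
              · exact Or.inr (Or.inl h)
      · show A.edges ∩ B.edges = ∅
        rw [hAe, hBe]
        ext e
        simp only [Finset.mem_inter, Finset.mem_union, Finset.notMem_empty, iff_false]
        rintro ⟨h1 | h1, h2 | h2⟩
        · exact (Finset.eq_empty_iff_forall_notMem.1 hd' e) (Finset.mem_inter.2 ⟨h1, h2⟩)
        · obtain ⟨v, hv, hvz⟩ := hEBZ e h2
          exact hA'eZ e h1 v hv hvz
        · obtain ⟨v, hv, hvz⟩ := hEAZ e h1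
          exact hB'eZ e h2 v hv hvz
        · rw [hEAdef, Finset.mem_filter] at h1
          rw [hEBdef, Finset.mem_filter] at h2
          exact h2.2.2 h1.2.2
    have hABord : sepOrder A B < θ := by
      show (A.verts ∩ B.verts).card < θ
      rw [hAv, hBv]
      have hset : (A'.verts ∪ Z) ∩ (B'.verts ∪ Z) = (A'.verts ∩ B'.verts) ∪ Z := by
        ext v
        simp only [Finset.mem_inter, Finset.mem_union]
        tauto
      have hdisZ : Disjoint (A'.verts ∩ B'.verts) Z := by
        rw [Finset.disjoint_left]
        intro v hv
        exact hA'Z v (Finset.mem_inter.1 hv).1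
      rw [hset, Finset.card_union_of_disjoint hdisZ]
      have h0 : (A'.verts ∩ B'.verts).card < θ - Z.card := hord'
      omega
    have hZAB : Z ⊆ A.verts ∩ B.verts := by
      intro v hv
      rw [Finset.mem_inter, hAv, hBv]
      exact ⟨Finset.mem_union_right _ hv, Finset.mem_union_right _ hv⟩
    have hAdel : A.del Z = A' := by rw [hAdef]; exact extend_del hA'Z hA'eZ hEAZ
    have hBdel : B.del Z = B' := by rw [hBdef]; exact extend_del hB'Z hB'eZ hEBZ
    rcases hax1 A B hsepAB hABord with h | h
    · exact Or.inl ⟨hsep', hord', ⟨A, B⟩, h, hZAB, hAdel, hBdel⟩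
    · refine Or.inr ⟨sep_symm hsep', by rw [sepOrder_symm]; exact hord',
        ⟨B, A⟩, h, ?_, hBdel, hAdel⟩
      rw [Finset.inter_comm]
      exact hZAB
  · -- Axiom (2)
    rintro p₁ ⟨hs₁, ho₁, q₁, hq₁T, hq₁Z, hq₁A, hq₁B⟩
      p₂ ⟨hs₂, ho₂, q₂, hq₂T, hq₂Z, hq₂A, hq₂B⟩
      p₃ ⟨hs₃, ho₃, q₃, hq₃T, hq₃Z, hq₃A, hq₃B⟩ heq
    have hsq₁ := (hmem _ hq₁T).1
    have hsq₂ := (hmem _ hq₂T).1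
    have hsq₃ := (hmem _ hq₃T).1
    set M₁ := q₁.2.edges.filter (fun e => (∃ v ∈ e, v ∈ Z) ∧ ∀ v ∈ e, v ∈ q₁.1.verts)
      with hM₁def
    set M₂ := q₂.2.edges.filter (fun e => (∃ v ∈ e, v ∈ Z) ∧ ∀ v ∈ e, v ∈ q₂.1.verts)
      with hM₂def
    set M₃ := q₃.2.edges.filter (fun e => (∃ v ∈ e, v ∈ Z) ∧ ∀ v ∈ e, v ∈ q₃.1.verts)
      with hM₃def
    have hM₁B : M₁ ⊆ q₁.2.edges := Finset.filter_subset _ _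
    have hM₂B : M₂ ⊆ q₂.2.edges := Finset.filter_subset _ _
    have hM₃B : M₃ ⊆ q₃.2.edges := Finset.filter_subset _ _
    have hM₁G : M₁ ⊆ G.edges := hM₁B.trans hsq₁.2.1.2
    have hM₂G : M₂ ⊆ G.edges := hM₂B.trans hsq₂.2.1.2
    have hM₃G : M₃ ⊆ G.edges := hM₃B.trans hsq₃.2.1.2
    have hM₁A : ∀ e ∈ M₁, ∀ v ∈ e, v ∈ q₁.1.verts := by
      intro e he; rw [hM₁def, Finset.mem_filter] at he; exact he.2.2
    have hM₂A : ∀ e ∈ M₂, ∀ v ∈ e, v ∈ q₂.1.verts := by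
      intro e he; rw [hM₂def, Finset.mem_filter] at he; exact he.2.2
    have hM₃A : ∀ e ∈ M₃, ∀ v ∈ e, v ∈ q₃.1.verts := by
      intro e he; rw [hM₃def, Finset.mem_filter] at he; exact he.2.2
    have hM₁B2 : ∀ e ∈ M₁, ∀ v ∈ e, v ∈ q₁.2.verts := fun e he => q₁.2.edge_sub e (hM₁B he)
    have hM₂B2 : ∀ e ∈ M₂, ∀ v ∈ e, v ∈ q₂.2.verts := fun e he => q₂.2.edge_sub e (hM₂B he)
    have hM₃B2 : ∀ e ∈ M₃, ∀ v ∈ e, v ∈ q₃.2.verts := fun e he => q₃.2.edge_sub e (hM₃B he)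
    have hsh₁ : (addE q₁.1 G M₁ hM₁G hM₁A, subE q₁.2 M₁) ∈ T :=
      shift_mem hT hq₁T hM₁B hM₁G hM₁A hM₁B2
    have hsh₂ : (addE q₂.1 G M₂ hM₂G hM₂A, subE q₂.2 M₂) ∈ T :=
      shift_mem hT hq₂T hM₂B hM₂G hM₂A hM₂B2
    have hsh₃ : (addE q₃.1 G M₃ hM₃G hM₃A, subE q₃.2 M₃) ∈ T :=
      shift_mem hT hq₃T hM₃B hM₃G hM₃A hM₃B2
    have hp₁v : ∀ v ∈ p₁.1.verts, v ∈ q₁.1.verts ∧ v ∉ Z := by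
      intro v hv; rw [← hq₁A] at hv; exact mem_del_verts.1 hv
    have hp₂v : ∀ v ∈ p₂.1.verts, v ∈ q₂.1.verts ∧ v ∉ Z := by
      intro v hv; rw [← hq₂A] at hv; exact mem_del_verts.1 hv
    have hp₃v : ∀ v ∈ p₃.1.verts, v ∈ q₃.1.verts ∧ v ∉ Z := by
      intro v hv; rw [← hq₃A] at hv; exact mem_del_verts.1 hv
    have hp₁e : ∀ e ∈ p₁.1.edges, e ∈ q₁.1.edges := by
      intro e he; rw [← hq₁A] at he; exact (mem_del_edges.1 he).1
    have hp₂e : ∀ e ∈ p₂.1.edges, e ∈ q₂.1.edges := by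
      intro e he; rw [← hq₂A] at he; exact (mem_del_edges.1 he).1
    have hp₃e : ∀ e ∈ p₃.1.edges, e ∈ q₃.1.edges := by
      intro e he; rw [← hq₃A] at he; exact (mem_del_edges.1 he).1
    apply hax2 _ hsh₁ _ hsh₂ _ hsh₃
    apply fg_ext
    · show q₁.1.verts ∪ (q₂.1.verts ∪ q₃.1.verts) = G.verts
      ext v
      simp only [Finset.mem_union]
      constructor
      · rintro (h | h | h)
        · exact hsq₁.1.1 h
        · exact hsq₂.1.1 h
        · exact hsq₃.1.1 h
      · intro hv
        by_cases hz : v ∈ Z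
        · exact Or.inl (Finset.mem_inter.1 (hq₁Z hz)).1
        · have h1 : v ∈ (G.del Z).verts := mem_del_verts.2 ⟨hv, hz⟩
          rw [← heq] at h1
          have h2 : v ∈ p₁.1.verts ∪ (p₂.1.verts ∪ p₃.1.verts) := h1
          rcases Finset.mem_union.1 h2 with h | h
          · exact Or.inl (hp₁v v h).1
          · rcases Finset.mem_union.1 h with h' | h'
            · exact Or.inr (Or.inl (hp₂v v h').1)
            · exact Or.inr (Or.inr (hp₃v v h').1)
    · show (q₁.1.edges ∪ M₁) ∪ ((q₂.1.edges ∪ M₂) ∪ (q₃.1.edges ∪ M₃)) = G.edges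
      ext e
      simp only [Finset.mem_union]
      constructor
      · rintro ((h | h) | (h | h) | (h | h))
        · exact hsq₁.1.2 h
        · exact hM₁G h
        · exact hsq₂.1.2 h
        · exact hM₂G h
        · exact hsq₃.1.2 h
        · exact hM₃G h
      · intro he
        by_cases hz : ∃ v ∈ e, v ∈ Z
        · by_cases h1 : e ∈ q₁.1.edges
          · exact Or.inl (Or.inl h1)
          by_cases h2 : e ∈ q₂.1.edges
          · exact Or.inr (Or.inl (Or.inl h2))
          by_cases h3 : e ∈ q₃.1.edges
          · exact Or.inr (Or.inr (Or.inl h3))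
          have hb : ∀ q : FinGraph V × FinGraph V, q ∈ T → e ∉ q.1.edges → e ∈ q.2.edges := by
            intro q hq hne
            have hu : q.1.edges ∪ q.2.edges = G.edges :=
              congrArg FinGraph.edges ((hmem _ hq).1.2.2.1)
            have he' := he
            rw [← hu] at he'
            rcases Finset.mem_union.1 he' with h | h
            · exact absurd h hne
            · exact h
          have hb₁ := hb q₁ hq₁T h1
          have hb₂ := hb q₂ hq₂T h2
          have hb₃ := hb q₃ hq₃T h3
          obtain ⟨z, hz1, hz2⟩ := hz
          have hwe : Sym2.Mem.other hz1 ∈ e := Sym2.other_mem hz1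
          set w := Sym2.Mem.other hz1 with hwdef
          have hall : ∀ v ∈ e, v = z ∨ v = w := by
            intro v hv
            rw [← Sym2.other_spec hz1] at hv
            exact Sym2.mem_iff.1 hv
          by_cases hwZ : w ∈ Z
          · refine Or.inl (Or.inr ?_)
            rw [hM₁def, Finset.mem_filter]
            refine ⟨hb₁, ⟨z, hz1, hz2⟩, ?_⟩
            intro v hv
            rcases hall v hv with rfl | rfl
            · exact (Finset.mem_inter.1 (hq₁Z hz2)).1
            · exact (Finset.mem_inter.1 (hq₁Z hwZ)).1
          · have hwG : w ∈ G.verts := G.edge_sub e he w hwe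
            have h1' : w ∈ (G.del Z).verts := mem_del_verts.2 ⟨hwG, hwZ⟩
            rw [← heq] at h1'
            have h2' : w ∈ p₁.1.verts ∪ (p₂.1.verts ∪ p₃.1.verts) := h1'
            have hj : w ∈ q₁.1.verts ∨ w ∈ q₂.1.verts ∨ w ∈ q₃.1.verts := by
              rcases Finset.mem_union.1 h2' with h | h
              · exact Or.inl (hp₁v w h).1
              · rcases Finset.mem_union.1 h with h' | h'
                · exact Or.inr (Or.inl (hp₂v w h').1)
                · exact Or.inr (Or.inr (hp₃v w h').1)
            rcases hj with hw | hw | hw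
            · refine Or.inl (Or.inr ?_)
              rw [hM₁def, Finset.mem_filter]
              refine ⟨hb₁, ⟨z, hz1, hz2⟩, ?_⟩
              intro v hv
              rcases hall v hv with rfl | rfl
              · exact (Finset.mem_inter.1 (hq₁Z hz2)).1
              · exact hw
            · refine Or.inr (Or.inl (Or.inr ?_))
              rw [hM₂def, Finset.mem_filter]
              refine ⟨hb₂, ⟨z, hz1, hz2⟩, ?_⟩
              intro v hv
              rcases hall v hv with rfl | rfl
              · exact (Finset.mem_inter.1 (hq₂Z hz2)).1
              · exact hw
            · refine Or.inr (Or.inr (Or.inr ?_))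
              rw [hM₃def, Finset.mem_filter]
              refine ⟨hb₃, ⟨z, hz1, hz2⟩, ?_⟩
              intro v hv
              rcases hall v hv with rfl | rfl
              · exact (Finset.mem_inter.1 (hq₃Z hz2)).1
              · exact hw
        · push_neg at hz
          have h1 : e ∈ (G.del Z).edges := mem_del_edges.2 ⟨he, hz⟩
          rw [← heq] at h1
          have h2 : e ∈ p₁.1.edges ∪ (p₂.1.edges ∪ p₃.1.edges) := h1
          rcases Finset.mem_union.1 h2 with h | h
          · exact Or.inl (Or.inl (hp₁e e h))
          · rcases Finset.mem_union.1 h with h' | h'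
            · exact Or.inr (Or.inl (Or.inl (hp₂e e h')))
            · exact Or.inr (Or.inr (Or.inl (hp₃e e h')))
  · -- Axiom (3)
    rintro p ⟨hsp, hop, q, hqT, hqZ, hqA, hqB⟩ heqv
    apply hax3 q hqT
    apply Finset.Subset.antisymm ((hmem _ hqT).1.1.1)
    intro v hv
    by_cases hz : v ∈ Z
    · exact (Finset.mem_inter.1 (hqZ hz)).1
    · have h1 : v ∈ (G.del Z).verts := mem_del_verts.2 ⟨hv, hz⟩
      rw [← heqv, ← hqA] at h1
      exact (mem_del_verts.1 h1).1
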